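/- (Integral representation of the characteristic function of the sample sum, formula (2.1)). For every real t and every 1 ≤ n < N, E exp{itS_{nN}} = (1/(√(2π) d_n(p))) ∫_{-π√(nq)}^{π√(nq)} ∏_{m=1}^N E exp{ itY_{mN}ξ_m + iτ(ξ_m − p)/√(nq) } dτ, where d_n(p) = √(2πnq) · C(N,n) p^n q^{N−n} with C(N,n) the binomial coefficient. -/

import Mathlib

open MeasureTheory ProbabilityTheory Real Filter Finset Asymptotics

noncomputable section

instance (α : Type*) : MeasurableSpace (Equiv.Perm α) := ⊤

/-- The standard normal distribution function. -/
def Phi (u : ℝ) : ℝ := (Real.sqrt (2 * Real.pi))⁻¹ * ∫ t in Set.Iic u, Real.exp (-t ^ 2 / 2)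

/-- A sampling scheme: a population `Y 1, …, Y N` of independent random variables, auxiliary
i.i.d.-independent Bernoulli(p) variables `ξ m` (with `p = n/N`) independent of the `Y`'s, and a
uniformly random permutation `r` independent of the `Y`'s. -/
structure PreScheme where
  N : ℕ
  n : ℕ
  hn1 : 1 ≤ n
  hnN : n ≤ N
  Ω : Type
  mΩ : MeasureSpace Ω

attribute [instance] PreScheme.mΩ

structure Scheme extends PreScheme where
  probΩ : IsProbabilityMeasure (volume : Measure Ω)
  Y : Fin N → Ω → ℝ
  measY : ∀ m, Measurable (Y m)
  ξ : Fin N → Ω → ℝ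
  measξ : ∀ m, Measurable (ξ m)
  ξ01 : ∀ m ω, ξ m ω = 0 ∨ ξ m ω = 1
  ξbern : ∀ m, (volume {ω | ξ m ω = 1}).toReal = (n : ℝ) / N
  indepAll : iIndepFun
    (Sum.elim Y ξ) volume
  r : Ω → Equiv.Perm (Fin N)
  meas_r : Measurable r
  unif_r : ∀ e : Equiv.Perm (Fin N), (volume {ω | r ω = e}).toReal = 1 / N.factorial
  indep_r : IndepFun (fun ω => fun m => Y m ω) r volume

namespace Scheme

variable (S : Scheme)

instance : IsProbabilityMeasure (volume : Measure S.Ω) := S.probΩ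

/-- `p = n/N`. -/
def p : ℝ := (S.n : ℝ) / S.N

/-- `q = 1 - p`. -/
def q : ℝ := 1 - S.p

/-- `γ = N⁻¹ Σ E Y m`. -/
def γ : ℝ := (S.N : ℝ)⁻¹ * ∑ m, ∫ ω, S.Y m ω

/-- `σ² = N⁻¹ Σ [E(Y m − γ)² − p (E(Y m − γ))²]`. -/
def σsq : ℝ := (S.N : ℝ)⁻¹ * ∑ m, ((∫ ω, (S.Y m ω - S.γ) ^ 2) - S.p * (∫ ω, (S.Y m ω - S.γ)) ^ 2)

/-- `σ`, the square root of `σ²`. -/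
def sd : ℝ := Real.sqrt S.σsq

/-- The sample sum `S_{nN} = Y_{r 1} + … + Y_{r n}`. -/
def Ssum (ω : S.Ω) : ℝ :=
  ∑ i ∈ Finset.univ.filter (fun i : Fin S.N => (i : ℕ) < S.n), S.Y (S.r ω i) ω

/-- `Z m = (Y m − γ) ξ m − p E(Y m − γ)`. -/
def Z (m : Fin S.N) (ω : S.Ω) : ℝ :=
  (S.Y m ω - S.γ) * S.ξ m ω - S.p * ∫ ω', (S.Y m ω' - S.γ)

/-- `Z̃ m = Z m / (σ √n)`. -/
def Zt (m : Fin S.N) (ω : S.Ω) : ℝ := S.Z m ω / (S.sd * Real.sqrt S.n)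

/-- `ξ̃ m = (ξ m − p)/√(nq)`. -/
def ξt (m : Fin S.N) (ω : S.Ω) : ℝ := (S.ξ m ω - S.p) / Real.sqrt ((S.n : ℝ) * S.q)

/-- Lyapunov ratio `β k = Σ E |Z̃ m|^k`. -/
def β (k : ℝ) : ℝ := ∑ m, ∫ ω, |S.Zt m ω| ^ k

/-- `κ l = (q^{l−1} + p^{l−1}) (nq)^{−(l−2)/2}`. -/
def κ (l : ℝ) : ℝ := (S.q ^ (l - 1) + S.p ^ (l - 1)) * ((S.n : ℝ) * S.q) ^ (-(l - 2) / 2)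

/-- `β⁽¹⁾ k`. -/
def β1 (k : ℝ) : ℝ :=
  ((S.N : ℝ)⁻¹ * ∑ m, ∫ ω, |S.Y m ω - S.p * (∫ ω', S.Y m ω') - S.q * S.γ| ^ k) /
    ((S.n : ℝ) ^ ((k - 2) / 2) * S.sd ^ k)

/-- `β⁽²⁾ k`. -/
def β2 (k : ℝ) : ℝ :=
  ((S.N : ℝ)⁻¹ * ∑ m, |∫ ω, (S.Y m ω - S.γ)| ^ k) / ((S.n : ℝ) ^ ((k - 2) / 2) * S.sd ^ k)

/-- `β̂ k = β⁽¹⁾ k + σ² β⁽²⁾ k`. -/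
def βhat (k : ℝ) : ℝ := S.β1 k + S.σsq * S.β2 k

/-- `V k = N⁻¹ Σ E|Y m − γ|^k`. -/
def V (k : ℝ) : ℝ := (S.N : ℝ)⁻¹ * ∑ m, ∫ ω, |S.Y m ω - S.γ| ^ k

/-- `μ k = V k / (σ^k n^{(k−2)/2})`. -/
def μ (k : ℝ) : ℝ := S.V k / (S.sd ^ k * (S.n : ℝ) ^ ((k - 2) / 2))

/-- `α_{kl}^{(i)} = N⁻¹ Σ (E(Y m − γ)^k)^i (E(Y m − γ))^l`. -/
def α (k l i : ℕ) : ℝ :=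
  (S.N : ℝ)⁻¹ * ∑ m, (∫ ω, (S.Y m ω - S.γ) ^ k) ^ i * (∫ ω, (S.Y m ω - S.γ)) ^ l

/-- `Λ₁ = α₃₀ − 3pα₂₁ + 2p²α₀₃`. -/
def Λ₁ : ℝ := S.α 3 0 1 - 3 * S.p * S.α 2 1 1 + 2 * S.p ^ 2 * S.α 0 3 1

/-- `Λ₂`. -/
def Λ₂ : ℝ := S.α 4 0 1 - 4 * S.p * S.α 3 1 1 + 12 * S.p ^ 2 * S.α 2 2 1 -
  6 * S.p ^ 3 * S.α 0 4 1 - 3 * S.p * S.α 2 0 2 - 3 * S.q * (S.α 2 0 1 - 2 * S.p * S.α 0 2 1) ^ 2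

/-- The two-term Edgeworth approximation `𝕎₂`. -/
def W2 (u : ℝ) : ℝ :=
  Phi u + (1 - u ^ 2) * Real.exp (-u ^ 2 / 2) * S.Λ₁ / (6 * S.sd ^ 3 * Real.sqrt (2 * Real.pi * S.n))

/-- The three-term Edgeworth approximation `𝕎₃`. -/
def W3 (u : ℝ) : ℝ :=
  Phi u - Real.exp (-u ^ 2 / 2) / Real.sqrt (2 * Real.pi) *
    ((u ^ 2 - 1) * S.Λ₁ / (6 * S.sd ^ 3 * Real.sqrt S.n) +
      (1 / (72 * S.n * S.sd ^ 6)) *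
        ((u ^ 5 - 10 * u ^ 3 + 15 * u) * S.Λ₁ ^ 2 + 3 * (u ^ 3 - 3 * u) * S.σsq * S.Λ₂ +
          36 * u * S.p * S.q * S.sd ^ 4 * S.α 0 2 1))

/-- `𝕎_j` for `j = 1, 2, 3`. -/
def Wj (j : ℕ) (u : ℝ) : ℝ :=
  match j with
  | 1 => Phi u
  | 2 => S.W2 u
  | 3 => S.W3 u
  | _ => 0

/-- `P_N(x) = P{S_{nN} < xσ√n + nγ}`. -/
def PN (x : ℝ) : ℝ := (volume {ω | S.Ssum ω < x * S.sd * Real.sqrt S.n + S.n * S.γ}).toReal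

/-- `Δ_j = sup_u |P{S_{nN} < uσ√n + nγ} − 𝕎_j(u)|`. -/
def Δ (j : ℕ) : ℝ := ⨆ u : ℝ, |S.PN u - S.Wj j u|

/-- The normalized characteristic function `φ_n(t) = E exp(it(S_{nN} − nγ)/(σ√n))`. -/
def φ (t : ℝ) : ℂ :=
  ∫ ω, Complex.exp (Complex.I * t * ((S.Ssum ω - S.n * S.γ) / (S.sd * Real.sqrt S.n)))

/-- `χ(d₀,d₁) = I{d₀<d₁} ∫_{d₀≤|t|≤d₁} |φ_n(tσ√n)/t| dt`. -/
def χ (d₀ d₁ : ℝ) : ℝ :=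
  if d₀ < d₁ then
    ∫ t in {t : ℝ | d₀ ≤ |t| ∧ |t| ≤ d₁}, ‖S.φ (t * (S.sd * Real.sqrt S.n)) / t‖
  else 0

/-- Characteristic function of `Y m`. -/
def chfY (m : Fin S.N) (t : ℝ) : ℂ := ∫ ω, Complex.exp (Complex.I * t * S.Y m ω)

/-- `χ₁(d₀,d₁)`. -/
def χ1 (d₀ d₁ : ℝ) : ℝ :=
  Real.sqrt ((S.n : ℝ) * S.q) * Real.log d₁ *
    Real.exp (-(S.n : ℝ) *
      (1 - ⨆ t : {t : ℝ // d₀ ≤ |t| ∧ |t| ≤ d₁},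
        (S.N : ℝ)⁻¹ * ∑ m, ‖S.chfY m t‖))

/-- `χ₂(d₀,d₁)`. -/
def χ2 (d₀ d₁ : ℝ) : ℝ :=
  Real.sqrt ((S.n : ℝ) * S.q) * Real.log d₁ *
    Real.exp (-2 * S.n * S.q *
      (1 - ⨆ t : {t : ℝ // d₀ ≤ |t| ∧ |t| ≤ d₁},
        (S.N : ℝ)⁻¹ * ‖∑ m, S.chfY m t‖))

/-- `ψ m (t,τ) = E exp(i(t Z̃ m + τ ξ̃ m))`. -/
def ψ (m : Fin S.N) (t τ : ℝ) : ℂ :=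
  ∫ ω, Complex.exp (Complex.I * (t * S.Zt m ω + τ * S.ξt m ω))

/-- `N^{-1/2} P_{1,N}(t,τ)`. -/
def Pq1 (t τ : ℝ) : ℂ :=
  Complex.I ^ 3 / 6 * ∑ m, ((∫ ω, (t * S.Zt m ω + τ * S.ξt m ω) ^ 3 : ℝ) : ℂ)

/-- `N^{-1} P_{2,N}(t,τ)`. -/
def Pq2 (t τ : ℝ) : ℂ :=
  Complex.I ^ 4 / 24 *
      ∑ m, (((∫ ω, (t * S.Zt m ω + τ * S.ξt m ω) ^ 4) -
        3 * (∫ ω, (t * S.Zt m ω + τ * S.ξt m ω) ^ 2) ^ 2 : ℝ) : ℂ) +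
    S.Pq1 t τ ^ 2 / 2

/-- `P̃_j(t,τ)` for `j = 1, 2, 3`. -/
def Ptil (j : ℕ) (t τ : ℝ) : ℂ :=
  match j with
  | 1 => 1
  | 2 => 1 + S.Pq1 t τ
  | 3 => 1 + S.Pq1 t τ + S.Pq2 t τ
  | _ => 0

/-- approximating characteristic functions `W_{jn}(t)` for `j = 1, 2, 3`. -/
def Wc (j : ℕ) (t : ℝ) : ℂ :=
  ((Real.exp (-t ^ 2 / 2) : ℝ) : ℂ) *
    (match j with
    | 1 => (1 : ℂ)
    | 2 => 1 + (Complex.I * t) ^ 3 * ((S.Λ₁ / (6 * Real.sqrt S.n * S.sd ^ 3) : ℝ) : ℂ)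
    | 3 => 1 + (Complex.I * t) ^ 3 * ((S.Λ₁ / (6 * Real.sqrt S.n * S.sd ^ 3) : ℝ) : ℂ) +
        (Complex.I * t) ^ 6 * ((S.Λ₁ ^ 2 / (72 * S.n * S.sd ^ 6) : ℝ) : ℂ) +
        (Complex.I * t) ^ 4 * ((S.Λ₂ / (24 * S.n * S.sd ^ 4) : ℝ) : ℂ) +
        (Complex.I * t) ^ 2 * ((S.p * S.q * S.α 0 2 1 / (2 * S.n * S.σsq) : ℝ) : ℂ)
    | _ => 0)

/-- `T_{j,N}` of Theorem 3.2. -/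
def TT (δ : ℝ) (j : ℕ) : ℝ :=
  0.0126 * max (S.βhat (min 3 (1 + (j : ℝ) + δ)))⁻¹
    (S.β (min 3 (1 + (j : ℝ) + δ)) + ((S.n : ℝ) * S.q) ^ (-(1 / 2) : ℝ))⁻¹

/-- `T_{j,N}` of Lemma 4.5. -/
def TL (δ : ℝ) (j : ℕ) : ℝ :=
  0.01 * max (S.βhat (min 3 (1 + (j : ℝ) + δ)))⁻¹
    (S.β (min 3 (1 + (j : ℝ) + δ)) + ((S.n : ℝ) * S.q) ^ (-(1 / 2) : ℝ))⁻¹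

/-- `T̃_j` of Theorem 3.3. -/
def Ttil (δ : ℝ) (j : ℕ) : ℝ := 0.115 * (S.μ (min 3 (1 + (j : ℝ) + δ)))⁻¹

/-- The Lindeberg sum `L_{2N}(ε) = Σ E[Z̃ m² I{|Z̃ m| ≥ ε}]`. -/
def L2 (ε : ℝ) : ℝ := ∑ m, ∫ ω in {ω' | ε ≤ |S.Zt m ω'|}, (S.Zt m ω) ^ 2

end Scheme

/-- Mean of a finite list of numbers. -/
def abar {N : ℕ} (a : Fin N → ℝ) : ℝ := (N : ℝ)⁻¹ * ∑ m, a m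

/-- `b² = N⁻¹ Σ (a m − ā)²`. -/
def bsq {N : ℕ} (a : Fin N → ℝ) : ℝ := (N : ℝ)⁻¹ * ∑ m, (a m - abar a) ^ 2

/-- `ã m = (a m − ā)/b`. -/
def atil {N : ℕ} (a : Fin N → ℝ) (m : Fin N) : ℝ := (a m - abar a) / Real.sqrt (bsq a)

/-- `A k = N⁻¹ Σ ã m ^ k`. -/
def Acoef {N : ℕ} (a : Fin N → ℝ) (k : ℕ) : ℝ := (N : ℝ)⁻¹ * ∑ m, atil a m ^ k

section Helpers

variable {Ω : Type*} [MeasureSpace Ω] [IsProbabilityMeasure (volume : Measure Ω)]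

lemma integrable_of_bdd {E : Type*} [NormedAddCommGroup E] {f : Ω → E}
    (hf : AEStronglyMeasurable f (volume : Measure Ω)) (hb : ∀ ω, ‖f ω‖ ≤ 1) :
    Integrable f (volume : Measure Ω) :=
  (integrable_const (1 : ℝ)).mono' hf (Filter.Eventually.of_forall hb)

lemma indep_integral_mul_complex {f g : Ω → ℂ} (hf : Measurable f) (hg : Measurable g)
    (hbf : ∀ ω, ‖f ω‖ ≤ 1) (hbg : ∀ ω, ‖g ω‖ ≤ 1)
    (h : IndepFun f g (volume : Measure Ω)) :
    ∫ ω, f ω * g ω = (∫ ω, f ω) * ∫ ω, g ω := by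
  have intf : Integrable f := integrable_of_bdd hf.aestronglyMeasurable hbf
  have intg : Integrable g := integrable_of_bdd hg.aestronglyMeasurable hbg
  have intfg : Integrable (fun ω => f ω * g ω) := by
    refine integrable_of_bdd (hf.mul hg).aestronglyMeasurable fun ω => ?_
    rw [norm_mul]
    exact mul_le_one₀ (hbf ω) (norm_nonneg _) (hbg ω)
  have bre : ∀ (u : Ω → ℂ), (∀ ω, ‖u ω‖ ≤ 1) → ∀ ω, |(u ω).re| ≤ 1 := fun u hb ω =>
    (Complex.abs_re_le_norm _).trans (hb ω)
  have bim : ∀ (u : Ω → ℂ), (∀ ω, ‖u ω‖ ≤ 1) → ∀ ω, |(u ω).im| ≤ 1 := fun u hb ω =>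
    (Complex.abs_im_le_norm _).trans (hb ω)
  have mre : ∀ {u : Ω → ℂ}, Measurable u → Measurable fun ω => (u ω).re := fun hu =>
    Complex.measurable_re.comp hu
  have mim : ∀ {u : Ω → ℂ}, Measurable u → Measurable fun ω => (u ω).im := fun hu =>
    Complex.measurable_im.comp hu
  have intprod : ∀ (a b : Ω → ℝ), Measurable a → Measurable b → (∀ ω, |a ω| ≤ 1) →
      (∀ ω, |b ω| ≤ 1) → Integrable (fun ω => a ω * b ω) := by
    intro a b ha hb hba hbb
    refine integrable_of_bdd (ha.mul hb).aestronglyMeasurable fun ω => ?_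
    rw [Real.norm_eq_abs, abs_mul]
    exact mul_le_one₀ (hba ω) (abs_nonneg _) (hbb ω)
  have i1 := intprod _ _ (mre hf) (mre hg) (bre f hbf) (bre g hbg)
  have i2 := intprod _ _ (mim hf) (mre hg) (bim f hbf) (bre g hbg)
  have i3 := intprod _ _ (mre hf) (mim hg) (bre f hbf) (bim g hbg)
  have i4 := intprod _ _ (mim hf) (mim hg) (bim f hbf) (bim g hbg)
  have e1 : ∫ ω, (f ω).re * (g ω).re = (∫ ω, (f ω).re) * ∫ ω, (g ω).re :=
    IndepFun.integral_fun_mul_eq_mul_integral (h.comp Complex.measurable_re Complex.measurable_re)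
      (mre hf).aestronglyMeasurable (mre hg).aestronglyMeasurable
  have e2 : ∫ ω, (f ω).im * (g ω).re = (∫ ω, (f ω).im) * ∫ ω, (g ω).re :=
    IndepFun.integral_fun_mul_eq_mul_integral (h.comp Complex.measurable_im Complex.measurable_re)
      (mim hf).aestronglyMeasurable (mre hg).aestronglyMeasurable
  have e3 : ∫ ω, (f ω).re * (g ω).im = (∫ ω, (f ω).re) * ∫ ω, (g ω).im :=
    IndepFun.integral_fun_mul_eq_mul_integral (h.comp Complex.measurable_re Complex.measurable_im)
      (mre hf).aestronglyMeasurable (mim hg).aestronglyMeasurable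
  have e4 : ∫ ω, (f ω).im * (g ω).im = (∫ ω, (f ω).im) * ∫ ω, (g ω).im :=
    IndepFun.integral_fun_mul_eq_mul_integral (h.comp Complex.measurable_im Complex.measurable_im)
      (mim hf).aestronglyMeasurable (mim hg).aestronglyMeasurable
  have hfre : ∫ ω, (f ω).re = (∫ ω, f ω).re := by
    simpa using integral_re (𝕜 := ℂ) intf
  have hfim : ∫ ω, (f ω).im = (∫ ω, f ω).im := by
    simpa using integral_im (𝕜 := ℂ) intf
  have hgre : ∫ ω, (g ω).re = (∫ ω, g ω).re := by
    simpa using integral_re (𝕜 := ℂ) intg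
  have hgim : ∫ ω, (g ω).im = (∫ ω, g ω).im := by
    simpa using integral_im (𝕜 := ℂ) intg
  have hre : ∫ ω, (f ω * g ω).re = (∫ ω, f ω * g ω).re := by
    simpa using integral_re (𝕜 := ℂ) intfg
  have him : ∫ ω, (f ω * g ω).im = (∫ ω, f ω * g ω).im := by
    simpa using integral_im (𝕜 := ℂ) intfg
  apply Complex.ext
  · rw [← hre, Complex.mul_re, ← hfre, ← hfim, ← hgre, ← hgim, ← e1, ← e4]
    simp only [Complex.mul_re]
    rw [integral_sub i1 i4]
  · rw [← him, Complex.mul_im, ← hfre, ← hfim, ← hgre, ← hgim, ← e2, ← e3]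
    simp only [Complex.mul_im]
    rw [integral_add i3 i2]

lemma norm_cexp_of_re_eq_zero {z : ℂ} (hz : z.re = 0) : ‖Complex.exp z‖ = 1 := by
  rw [Complex.norm_exp, hz, Real.exp_zero]

lemma indep_setIntegral {β γ : Type*} [MeasurableSpace β] [MeasurableSpace γ]
    {X : Ω → β} {T : Ω → γ} (hX : Measurable X) (hT : Measurable T)
    (h : IndepFun X T (volume : Measure Ω)) {g : β → ℂ} (hg : Measurable g)
    (hb : ∀ b, ‖g b‖ ≤ 1) {s : Set γ} (hs : MeasurableSet s) :
    ∫ ω in T ⁻¹' s, g (X ω) = ((volume (T ⁻¹' s)).toReal : ℂ) * ∫ ω, g (X ω) := by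
  classical
  set ind : γ → ℂ := fun c => if c ∈ s then 1 else 0 with hind
  have hindmeas : Measurable ind := measurable_const.ite hs measurable_const
  have hprod : ∀ ω, g (X ω) * ind (T ω) = (T ⁻¹' s).indicator (fun ω => g (X ω)) ω := by
    intro ω
    by_cases hω : T ω ∈ s <;> simp [hind, hω, Set.indicator_apply, Set.mem_preimage]
  have hindep : IndepFun (fun ω => g (X ω)) (fun ω => ind (T ω)) volume :=
    h.comp hg hindmeas
  have hmeag : Measurable fun ω => g (X ω) := hg.comp hX
  have hbi : ∀ ω, ‖ind (T ω)‖ ≤ 1 := by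
    intro ω; by_cases hω : T ω ∈ s <;> simp [hind, hω]
  have := indep_integral_mul_complex hmeag (hindmeas.comp hT) (fun ω => hb _) hbi hindep
  simp only [Function.comp_def] at this
  simp only [hprod] at this
  rw [integral_indicator (hT hs)] at this
  rw [this]
  have : ∫ ω, ind (T ω) = ((volume (T ⁻¹' s)).toReal : ℂ) := by
    have : (fun ω => ind (T ω)) = (T ⁻¹' s).indicator (fun _ => (1 : ℂ)) := by
      funext ω
      by_cases hω : T ω ∈ s <;> simp [hind, hω, Set.indicator_apply, Set.mem_preimage]
    rw [this, integral_indicator_const (1 : ℂ) (hT hs)]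
    simp
    rfl
  rw [this, mul_comm]

end Helpers

lemma card_filter_lt_fin (N n : ℕ) (hn : n ≤ N) :
    ((Finset.univ : Finset (Fin N)).filter fun i : Fin N => (i : ℕ) < n).card = n := by
  classical
  have h : ((Finset.univ : Finset (Fin N)).filter fun i : Fin N => (i : ℕ) < n)
      = Finset.image (Fin.castLE hn) Finset.univ := by
    ext m
    simp only [mem_filter, mem_univ, true_and, mem_image]
    constructor
    · intro hm
      exact ⟨⟨(m : ℕ), hm⟩, Fin.ext rfl⟩
    · rintro ⟨i, rfl⟩
      exact i.2
  rw [h, Finset.card_image_of_injective _ (Fin.castLE_injective hn), Finset.card_univ,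
    Fintype.card_fin]

lemma exists_perm_image {α : Type*} [Fintype α] [DecidableEq α] {A B : Finset α}
    (h : A.card = B.card) : ∃ σ : Equiv.Perm α, A.image σ = B := by
  classical
  have hcard : Fintype.card {x // x ∈ A} = Fintype.card {x // x ∈ B} := by
    simpa [Fintype.card_coe] using h
  let e : {x // x ∈ A} ≃ {x // x ∈ B} := Fintype.equivOfCardEq hcard
  refine ⟨e.extendSubtype, ?_⟩
  have hsub : A.image e.extendSubtype ⊆ B := by
    intro x hx
    rcases Finset.mem_image.mp hx with ⟨a, ha, rfl⟩
    exact e.extendSubtype_mem a ha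
  refine Finset.eq_of_subset_of_card_le hsub ?_
  rw [Finset.card_image_of_injective _ e.extendSubtype.injective, h]

lemma perm_count {N : ℕ} (n : ℕ) (hn : n ≤ N) (F : Fin N → ℂ) :
    (N.choose n : ℂ) * ∑ e : Equiv.Perm (Fin N),
        ∏ i ∈ (Finset.univ.filter fun i : Fin N => (i : ℕ) < n), F (e i) =
      (N.factorial : ℂ) *
        ∑ A ∈ Finset.powersetCard n (Finset.univ : Finset (Fin N)), ∏ m ∈ A, F m := by
  classical
  set I₀ := (Finset.univ.filter fun i : Fin N => (i : ℕ) < n) with hI₀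
  have hI₀card : I₀.card = n := card_filter_lt_fin N n hn
  set T := Finset.powersetCard n (Finset.univ : Finset (Fin N)) with hT
  have hmaps : ∀ e : Equiv.Perm (Fin N), I₀.image e ∈ T := by
    intro e
    simp [hT, Finset.mem_powersetCard, Finset.subset_univ,
      Finset.card_image_of_injective _ e.injective, hI₀card]
  have hfib : ∑ e : Equiv.Perm (Fin N), ∏ i ∈ I₀, F (e i) =
      ∑ A ∈ T, ((Finset.univ.filter fun e : Equiv.Perm (Fin N) => I₀.image e = A).card : ℂ) *
        ∏ m ∈ A, F m := by
    rw [← Finset.sum_fiberwise_of_maps_to (fun e _ => hmaps e) (fun e => ∏ i ∈ I₀, F (e i))]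
    refine Finset.sum_congr rfl fun A _ => ?_
    have : ∀ e ∈ Finset.univ.filter fun e : Equiv.Perm (Fin N) => I₀.image e = A,
        ∏ i ∈ I₀, F (e i) = ∏ m ∈ A, F m := by
      intro e he
      rw [Finset.mem_filter] at he
      rw [← he.2, Finset.prod_image fun a _ b _ hab => e.injective hab]
    rw [Finset.sum_congr rfl this, Finset.sum_const, nsmul_eq_mul]
  have hconst : ∀ A ∈ T, ∀ B ∈ T,
      (Finset.univ.filter fun e : Equiv.Perm (Fin N) => I₀.image e = A).card =
      (Finset.univ.filter fun e : Equiv.Perm (Fin N) => I₀.image e = B).card := by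
    intro A hA B hB
    rw [Finset.mem_powersetCard] at hA hB
    obtain ⟨σ, hσ⟩ := exists_perm_image (h := hA.2.trans hB.2.symm) (A := A) (B := B)
    refine Finset.card_nbij' (fun e => σ * e) (fun e => σ⁻¹ * e) ?_ ?_ ?_ ?_
    · intro e he
      rw [Finset.mem_coe, Finset.mem_filter] at he ⊢
      refine ⟨Finset.mem_univ _, ?_⟩
      have : I₀.image ⇑(σ * e) = (I₀.image ⇑e).image ⇑σ := by
        rw [Finset.image_image]; rfl
      rw [this, he.2, hσ]
    · intro e he
      rw [Finset.mem_coe, Finset.mem_filter] at he ⊢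
      refine ⟨Finset.mem_univ _, ?_⟩
      have h1 : I₀.image ⇑(σ⁻¹ * e) = (I₀.image ⇑e).image ⇑(σ⁻¹) := by
        rw [Finset.image_image]; rfl
      have h2 : B.image ⇑(σ⁻¹) = A := by
        rw [← hσ, Finset.image_image]
        have : (⇑(σ⁻¹) ∘ ⇑σ) = id := by funext x; simp
        rw [this, Finset.image_id]
      rw [h1, he.2, h2]
    · intro e _; group
    · intro e _; group
  have htot : ∑ A ∈ T, (Finset.univ.filter fun e : Equiv.Perm (Fin N) => I₀.image e = A).card
      = N.factorial := by
    rw [← Finset.card_eq_sum_card_fiberwise (fun e _ => hmaps e)]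
    simp [Finset.card_univ, Fintype.card_perm, Fintype.card_fin]
  have hI₀T : I₀ ∈ T := by
    simp [hT, Finset.mem_powersetCard, Finset.subset_univ, hI₀card]
  set K := (Finset.univ.filter fun e : Equiv.Perm (Fin N) => I₀.image e = I₀).card with hK
  have hKC : T.card * K = N.factorial := by
    rw [← htot, Finset.sum_congr rfl fun A hA => (hconst A hA I₀ hI₀T), Finset.sum_const,
      smul_eq_mul]
  have hTcard : T.card = N.choose n := by
    rw [hT, Finset.card_powersetCard, Finset.card_univ, Fintype.card_fin]
  rw [hfib, Finset.sum_congr rfl (fun A hA => by rw [hconst A hA I₀ hI₀T]), ← hK]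
  rw [← Finset.mul_sum, ← mul_assoc]
  have : (N.choose n : ℂ) * K = (N.factorial : ℂ) := by
    rw [← hTcard, ← hKC]; push_cast; ring
  rw [this]

lemma int_exp_tau {s : ℝ} (hs : 0 < s) (k : ℤ) :
    ∫ τ in (-(Real.pi * s))..(Real.pi * s), Complex.exp (Complex.I * τ * (((k : ℝ) / s : ℝ) : ℂ))
      = if k = 0 then ((2 * Real.pi * s : ℝ) : ℂ) else 0 := by
  by_cases hk : k = 0
  · simp only [hk, if_pos rfl, Int.cast_zero, zero_div, Complex.ofReal_zero, mul_zero,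
      Complex.exp_zero]
    rw [intervalIntegral.integral_const, if_pos trivial]
    rw [Complex.real_smul]
    push_cast
    ring
  · have hs' : (s : ℂ) ≠ 0 := by exact_mod_cast hs.ne'
    have hc : (Complex.I * (((k : ℝ) / s : ℝ) : ℂ)) ≠ 0 := by
      apply mul_ne_zero Complex.I_ne_zero
      simp only [ne_eq, Complex.ofReal_eq_zero, div_eq_zero_iff]
      push_neg
      exact ⟨by exact_mod_cast hk, hs.ne'⟩
    have hrw : ∀ τ : ℝ, Complex.I * τ * (((k : ℝ) / s : ℝ) : ℂ)
        = (Complex.I * (((k : ℝ) / s : ℝ) : ℂ)) * τ := fun τ => by ring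
    rw [if_neg hk]
    simp only [hrw]
    rw [integral_exp_mul_complex hc]
    have h1 : Complex.I * (((k : ℝ) / s : ℝ) : ℂ) * ((Real.pi * s : ℝ) : ℂ)
        = (k : ℂ) * (Real.pi * Complex.I) := by
      push_cast
      field_simp
    have h2 : Complex.I * (((k : ℝ) / s : ℝ) : ℂ) * ((-(Real.pi * s) : ℝ) : ℂ)
        = (-k : ℂ) * (Real.pi * Complex.I) := by
      push_cast
      field_simp
    have hz : ∀ j : ℤ, Complex.exp ((j : ℂ) * (Real.pi * Complex.I)) = (-1 : ℂ) ^ j := by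
      intro j
      rw [Complex.exp_int_mul, Complex.exp_pi_mul_I]
    rw [h1]
    have h2' : ((-k : ℂ)) = ((-k : ℤ) : ℂ) := by push_cast; ring
    rw [h2, h2', hz k, hz (-k)]
    rw [zpow_neg]
    have : ((-1 : ℂ) ^ k)⁻¹ = (-1 : ℂ) ^ k := by
      refine inv_eq_of_mul_eq_one_right ?_
      rw [← mul_zpow]
      norm_num
    rw [this, sub_self, zero_div]


namespace Scheme

lemma measurable_cexpY (S : Scheme) (t : ℝ) (m : Fin S.N) :
    Measurable fun ω => Complex.exp (Complex.I * t * S.Y m ω) :=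
  Complex.measurable_exp.comp
    (measurable_const.mul (Complex.measurable_ofReal.comp (S.measY m)))

lemma norm_cexpY (S : Scheme) (t : ℝ) (m : Fin S.N) (ω : S.Ω) :
    ‖Complex.exp (Complex.I * t * S.Y m ω)‖ = 1 :=
  norm_cexp_of_re_eq_zero (by simp)

lemma integral_prod_cexp (S : Scheme) (t : ℝ) (A : Finset (Fin S.N)) :
    ∫ ω, ∏ m ∈ A, Complex.exp (Complex.I * t * S.Y m ω) = ∏ m ∈ A, S.chfY m t := by
  classical
  induction A using Finset.cons_induction with
  | empty => simp
  | cons a A ha ih =>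
    set g : Fin S.N ⊕ Fin S.N → S.Ω → ℂ :=
      fun k ω => Complex.exp (Complex.I * t * (Sum.elim S.Y S.ξ k ω)) with hg
    have hgmeas : ∀ k, Measurable (g k) := by
      intro k
      apply Complex.measurable_exp.comp
      apply measurable_const.mul
      apply Complex.measurable_ofReal.comp
      cases k with
      | inl m => exact S.measY m
      | inr m => exact S.measξ m
    have hgind : iIndepFun g volume := by
      have := S.indepAll.comp (g := fun _ : Fin S.N ⊕ Fin S.N =>
          fun x : ℝ => Complex.exp (Complex.I * t * x))
        (fun _ => Complex.measurable_exp.comp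
          (measurable_const.mul Complex.measurable_ofReal))
      exact this
    have hnotmem : (Sum.inl a : Fin S.N ⊕ Fin S.N) ∉ A.image Sum.inl := by
      simp [ha]
    have hfin := hgind.indepFun_finset_prod_of_notMem hgmeas hnotmem
    have hP : (∏ j ∈ A.image Sum.inl, g j)
        = fun ω => ∏ m ∈ A, Complex.exp (Complex.I * t * S.Y m ω) := by
      funext ω
      rw [Finset.prod_apply, Finset.prod_image (fun a _ b _ h => Sum.inl.inj h)]
      rfl
    rw [hP] at hfin
    have hga : g (Sum.inl a) = fun ω => Complex.exp (Complex.I * t * S.Y a ω) := rfl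
    rw [hga] at hfin
    have hprodmeas : Measurable fun ω => ∏ m ∈ A, Complex.exp (Complex.I * t * S.Y m ω) :=
      Finset.measurable_prod _ fun m _ => S.measurable_cexpY t m
    have hprodb : ∀ ω, ‖∏ m ∈ A, Complex.exp (Complex.I * t * S.Y m ω)‖ ≤ 1 := by
      intro ω
      rw [norm_prod]
      refine le_of_eq (Finset.prod_eq_one fun m _ => S.norm_cexpY t m ω)
    have key := indep_integral_mul_complex (S.measurable_cexpY t a) hprodmeas
      (fun ω => le_of_eq (S.norm_cexpY t a ω)) hprodb hfin.symm
    simp only [Finset.prod_cons]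
    rw [key, ih]
    rfl

lemma lhs_eq (S : Scheme) (t : ℝ) :
    ∫ ω, Complex.exp (Complex.I * t * S.Ssum ω) =
      (((S.N.factorial : ℝ)⁻¹ : ℝ) : ℂ) * ∑ e : Equiv.Perm (Fin S.N),
        ∏ i ∈ Finset.univ.filter (fun i : Fin S.N => (i : ℕ) < S.n), S.chfY (e i) t := by
  classical
  set I₀ := Finset.univ.filter (fun i : Fin S.N => (i : ℕ) < S.n) with hI₀
  have hsetmeas : ∀ e : Equiv.Perm (Fin S.N), MeasurableSet {ω | S.r ω = e} := by
    intro e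
    have : {ω | S.r ω = e} = S.r ⁻¹' {e} := rfl
    rw [this]
    exact S.meas_r (MeasurableSpace.measurableSet_top)
  set fe : Equiv.Perm (Fin S.N) → S.Ω → ℂ :=
    fun e ω => Complex.exp (Complex.I * t * ((∑ i ∈ I₀, S.Y (e i) ω : ℝ) : ℂ)) with hfe
  have hfe_meas : ∀ e, Measurable (fe e) := by
    intro e
    apply Complex.measurable_exp.comp
    apply measurable_const.mul
    exact Complex.measurable_ofReal.comp (Finset.measurable_sum _ fun i _ => S.measY (e i))
  have hfe_b : ∀ e ω, ‖fe e ω‖ ≤ 1 := fun e ω =>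
    le_of_eq (norm_cexp_of_re_eq_zero (by simp [hfe]))
  have hsplit : (fun ω => Complex.exp (Complex.I * t * S.Ssum ω))
      = fun ω => ∑ e : Equiv.Perm (Fin S.N), ({ω' | S.r ω' = e}).indicator (fe e) ω := by
    funext ω
    rw [Finset.sum_eq_single (S.r ω)]
    · rw [Set.indicator_of_mem (by exact rfl : ω ∈ {ω' | S.r ω' = S.r ω})]
      rfl
    · intro b _ hb
      refine Set.indicator_of_notMem ?_ _
      intro h
      have h' : S.r ω = b := h
      exact hb h'.symm
    · intro h
      exact absurd (Finset.mem_univ _) h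
  rw [hsplit, integral_finset_sum _ (fun e _ =>
    ((integrable_of_bdd (hfe_meas e).aestronglyMeasurable (hfe_b e)).indicator (hsetmeas e)))]
  have hterm : ∀ e : Equiv.Perm (Fin S.N),
      ∫ ω, ({ω' | S.r ω' = e}).indicator (fe e) ω
        = (((S.N.factorial : ℝ)⁻¹ : ℝ) : ℂ) * ∏ i ∈ I₀, S.chfY (e i) t := by
    intro e
    rw [integral_indicator (hsetmeas e)]
    have hpre : {ω' | S.r ω' = e} = S.r ⁻¹' {e} := by
      ext ω; simp [Set.mem_preimage]
    have hXmeas : Measurable fun ω => (fun m => S.Y m ω) :=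
      measurable_pi_lambda _ fun m => S.measY m
    have hgmeas : Measurable fun v : Fin S.N → ℝ =>
        Complex.exp (Complex.I * t * ((∑ i ∈ I₀, v (e i) : ℝ) : ℂ)) := by
      apply Complex.measurable_exp.comp
      apply measurable_const.mul
      exact Complex.measurable_ofReal.comp (Finset.measurable_sum _ fun i _ =>
        measurable_pi_apply (e i))
    have hgb : ∀ v : Fin S.N → ℝ,
        ‖Complex.exp (Complex.I * t * ((∑ i ∈ I₀, v (e i) : ℝ) : ℂ))‖ ≤ 1 :=
      fun v => le_of_eq (norm_cexp_of_re_eq_zero (by simp))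
    have hkey := indep_setIntegral hXmeas S.meas_r S.indep_r hgmeas hgb
      (s := {e}) MeasurableSpace.measurableSet_top
    rw [hpre]
    rw [show (fun ω => fe e ω) = fun ω =>
      Complex.exp (Complex.I * t * ((∑ i ∈ I₀, (fun m => S.Y m ω) (e i) : ℝ) : ℂ)) from rfl]
    rw [hkey]
    have hvol : (volume (S.r ⁻¹' ({e} : Set (Equiv.Perm (Fin S.N))))).toReal
        = (S.N.factorial : ℝ)⁻¹ := by
      rw [← hpre]
      rw [show {ω' | S.r ω' = e} = {ω | S.r ω = e} from rfl]
      rw [S.unif_r e, one_div]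
    rw [hvol]
    congr 1
    have hexp : (fun ω => Complex.exp (Complex.I * t * ((∑ i ∈ I₀, S.Y (e i) ω : ℝ) : ℂ)))
        = fun ω => ∏ m ∈ I₀.image ⇑e, Complex.exp (Complex.I * t * S.Y m ω) := by
      funext ω
      have hsum : ∑ i ∈ I₀, S.Y (e i) ω = ∑ m ∈ I₀.image ⇑e, S.Y m ω :=
        (Finset.sum_image (g := ⇑e) (f := fun m => S.Y m ω) (s := I₀)
          fun a _ b _ h => e.injective h).symm
      rw [hsum, Complex.ofReal_sum, Finset.mul_sum, Complex.exp_sum]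
    rw [hexp, S.integral_prod_cexp t (I₀.image ⇑e),
      Finset.prod_image fun a _ b _ h => e.injective h]
  rw [Finset.sum_congr rfl fun e _ => hterm e, ← Finset.mul_sum]

end Scheme


namespace Scheme

lemma inner_factor (S : Scheme) (t τ : ℝ) (m : Fin S.N) :
    (∫ ω, Complex.exp (Complex.I * t * S.Y m ω * S.ξ m ω +
        Complex.I * τ * ((S.ξ m ω - S.p) / Real.sqrt ((S.n : ℝ) * S.q)))) =
      ((S.p : ℝ) : ℂ) * S.chfY m t *
          Complex.exp (Complex.I * τ *
            ((S.q / Real.sqrt ((S.n : ℝ) * S.q) : ℝ) : ℂ)) +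
        ((S.q : ℝ) : ℂ) *
          Complex.exp (Complex.I * τ *
            ((-S.p / Real.sqrt ((S.n : ℝ) * S.q) : ℝ) : ℂ)) := by
  classical
  set s := Real.sqrt ((S.n : ℝ) * S.q) with hsdef
  have hform : (fun ω => Complex.exp (Complex.I * t * S.Y m ω * S.ξ m ω +
      Complex.I * τ * ((S.ξ m ω - S.p) / (s : ℂ))))
      = fun ω => Complex.exp (Complex.I * t * S.Y m ω * S.ξ m ω +
        Complex.I * τ * (((S.ξ m ω - S.p) / s : ℝ) : ℂ)) := by
    funext ω
    norm_cast
  rw [hform]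
  set f : S.Ω → ℂ := fun ω => Complex.exp (Complex.I * t * S.Y m ω * S.ξ m ω +
    Complex.I * τ * (((S.ξ m ω - S.p) / s : ℝ) : ℂ)) with hfdef
  have hfm : Measurable f := by
    apply Complex.measurable_exp.comp
    apply Measurable.add
    · exact (measurable_const.mul (Complex.measurable_ofReal.comp (S.measY m))).mul
        (Complex.measurable_ofReal.comp (S.measξ m))
    · exact measurable_const.mul (Complex.measurable_ofReal.comp
        (((S.measξ m).sub measurable_const).div measurable_const))
  have hfb : ∀ ω, ‖f ω‖ ≤ 1 := by
    intro ω
    rw [hfdef]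
    exact le_of_eq (norm_cexp_of_re_eq_zero (by simp))
  have hint : Integrable f := integrable_of_bdd hfm.aestronglyMeasurable hfb
  have hA : MeasurableSet {ω | S.ξ m ω = 1} := by
    have h : {ω | S.ξ m ω = 1} = S.ξ m ⁻¹' {1} := rfl
    rw [h]
    exact S.measξ m (measurableSet_singleton 1)
  have hPA : (volume {ω | S.ξ m ω = 1}).toReal = S.p := S.ξbern m
  have hq1 : S.q = 1 - S.p := rfl
  have hAc : {ω | S.ξ m ω = 1}ᶜ = {ω | S.ξ m ω = 0} := by
    ext ω
    simp only [Set.mem_compl_iff, Set.mem_setOf_eq]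
    rcases S.ξ01 m ω with h | h <;> simp [h]
  have hPAc : (volume {ω | S.ξ m ω = 1}ᶜ).toReal = S.q := by
    rw [measure_compl hA (measure_ne_top _ _), measure_univ,
      ENNReal.toReal_sub_of_le prob_le_one (by simp), ENNReal.toReal_one, hPA, hq1]
  rw [← integral_add_compl hA hint]
  have e1 : ∫ ω in {ω | S.ξ m ω = 1}, f ω =
      ((S.p : ℝ) : ℂ) * S.chfY m t *
        Complex.exp (Complex.I * τ * ((S.q / s : ℝ) : ℂ)) := by
    have hcong : ∀ ω ∈ {ω | S.ξ m ω = 1}, f ω =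
        Complex.exp (Complex.I * τ * ((S.q / s : ℝ) : ℂ)) *
          Complex.exp (Complex.I * t * S.Y m ω) := by
      intro ω hω
      have hξ : S.ξ m ω = 1 := hω
      rw [hfdef]
      simp only [hξ]
      rw [← Complex.exp_add]
      congr 1
      rw [hq1]
      push_cast
      ring
    rw [setIntegral_congr_fun hA hcong, integral_const_mul]
    have hindep : IndepFun (S.Y m) (S.ξ m) volume :=
      S.indepAll.indepFun (show (Sum.inl m : Fin S.N ⊕ Fin S.N) ≠ Sum.inr m by simp)
    have hgmeas : Measurable fun x : ℝ => Complex.exp (Complex.I * t * x) :=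
      Complex.measurable_exp.comp (measurable_const.mul Complex.measurable_ofReal)
    have hgb : ∀ x : ℝ, ‖Complex.exp (Complex.I * t * x)‖ ≤ 1 :=
      fun x => le_of_eq (norm_cexp_of_re_eq_zero (by simp))
    have hpre : {ω | S.ξ m ω = 1} = S.ξ m ⁻¹' {1} := rfl
    rw [hpre, indep_setIntegral (S.measY m) (S.measξ m) hindep hgmeas hgb
      (measurableSet_singleton 1), ← hpre, hPA]
    have : (∫ ω, Complex.exp (Complex.I * t * S.Y m ω)) = S.chfY m t := rfl
    rw [this]
    ring
  have e2 : ∫ ω in {ω | S.ξ m ω = 1}ᶜ, f ω =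
      ((S.q : ℝ) : ℂ) * Complex.exp (Complex.I * τ * ((-S.p / s : ℝ) : ℂ)) := by
    have hcong : ∀ ω ∈ {ω | S.ξ m ω = 1}ᶜ, f ω =
        Complex.exp (Complex.I * τ * ((-S.p / s : ℝ) : ℂ)) := by
      intro ω hω
      have hξ : S.ξ m ω = 0 := by
        rw [hAc] at hω
        exact hω
      rw [hfdef]
      simp only [hξ]
      norm_num
    rw [setIntegral_congr_fun hA.compl hcong, setIntegral_const, measureReal_def, hPAc, Complex.real_smul]
  rw [e1, e2]

lemma prod_cf (S : Scheme) (hlt : S.n < S.N) (t τ : ℝ) :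
    (∏ m, ∫ ω, Complex.exp (Complex.I * t * S.Y m ω * S.ξ m ω +
        Complex.I * τ * ((S.ξ m ω - S.p) / Real.sqrt ((S.n : ℝ) * S.q)))) =
      ∑ A ∈ (Finset.univ : Finset (Fin S.N)).powerset,
        ((S.p ^ A.card * S.q ^ (S.N - A.card) : ℝ) : ℂ) * (∏ m ∈ A, S.chfY m t) *
          Complex.exp (Complex.I * τ *
            ((((((A.card : ℤ) - (S.n : ℤ) : ℤ) : ℝ)) / Real.sqrt ((S.n : ℝ) * S.q) : ℝ) : ℂ)) := by
  classical
  set s := Real.sqrt ((S.n : ℝ) * S.q) with hsdef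
  have hN0 : (S.N : ℝ) ≠ 0 := Nat.cast_ne_zero.mpr (by have := S.hn1; omega)
  have hNp : (S.N : ℝ) * S.p = S.n := by
    rw [show S.p = (S.n : ℝ) / S.N from rfl]
    field_simp
  have hq1 : S.q = 1 - S.p := rfl
  rw [Finset.prod_congr rfl fun m _ => S.inner_factor t τ m, Finset.prod_add]
  refine Finset.sum_congr rfl fun A hA => ?_
  have hAsub : A ⊆ Finset.univ := Finset.mem_powerset.mp hA
  have hcard : A.card ≤ S.N := by
    have := Finset.card_le_card hAsub
    simpa using this
  have hsd : (Finset.univ \ A).card = S.N - A.card := by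
    rw [Finset.card_sdiff_of_subset hAsub, Finset.card_univ, Fintype.card_fin]
  rw [Finset.prod_mul_distrib, Finset.prod_mul_distrib, Finset.prod_mul_distrib,
    Finset.prod_const, Finset.prod_const, Finset.prod_const, Finset.prod_const, hsd]
  have hexp : ((S.q / s : ℝ) : ℂ) = ((S.q / s : ℝ) : ℂ) := rfl
  -- combine the exponentials
  have hcomb : Complex.exp (Complex.I * τ * ((S.q / s : ℝ) : ℂ)) ^ A.card *
      Complex.exp (Complex.I * τ * ((-S.p / s : ℝ) : ℂ)) ^ (S.N - A.card) =
      Complex.exp (Complex.I * τ *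
        ((((((A.card : ℤ) - (S.n : ℤ) : ℤ) : ℝ)) / s : ℝ) : ℂ)) := by
    rw [← Complex.exp_nat_mul, ← Complex.exp_nat_mul, ← Complex.exp_add]
    congr 1
    have hreal : (A.card : ℝ) * (S.q / s) + ((S.N - A.card : ℕ) : ℝ) * (-S.p / s)
        = ((((A.card : ℤ) - (S.n : ℤ) : ℤ) : ℝ)) / s := by
      rw [Nat.cast_sub hcard]
      push_cast
      rw [hq1]
      by_cases hs0 : s = 0
      · simp [hs0]
      · field_simp
        linear_combination -hNp
    calc (A.card : ℂ) * (Complex.I * τ * ((S.q / s : ℝ) : ℂ)) +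
          ((S.N - A.card : ℕ) : ℂ) * (Complex.I * τ * ((-S.p / s : ℝ) : ℂ))
        = Complex.I * τ * (((A.card : ℝ) * (S.q / s)
            + ((S.N - A.card : ℕ) : ℝ) * (-S.p / s) : ℝ) : ℂ) := by
          push_cast
          ring
      _ = Complex.I * τ * ((((((A.card : ℤ) - (S.n : ℤ) : ℤ) : ℝ)) / s : ℝ) : ℂ) := by
          rw [hreal]
  rw [mul_mul_mul_comm, hcomb]
  push_cast
  ring

end Scheme


namespace Scheme

lemma rhs_val (S : Scheme) (hlt : S.n < S.N) (t : ℝ) :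
    (∫ τ in Set.Icc (-(Real.pi * Real.sqrt ((S.n : ℝ) * S.q)))
        (Real.pi * Real.sqrt ((S.n : ℝ) * S.q)),
      ∏ m, ∫ ω, Complex.exp (Complex.I * t * S.Y m ω * S.ξ m ω +
        Complex.I * τ * ((S.ξ m ω - S.p) / Real.sqrt ((S.n : ℝ) * S.q)))) =
      ((2 * Real.pi * Real.sqrt ((S.n : ℝ) * S.q) *
          (S.p ^ S.n * S.q ^ (S.N - S.n)) : ℝ) : ℂ) *
        ∑ A ∈ Finset.powersetCard S.n (Finset.univ : Finset (Fin S.N)),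
          ∏ m ∈ A, S.chfY m t := by
  classical
  set s := Real.sqrt ((S.n : ℝ) * S.q) with hsdef
  have hN0 : (0 : ℝ) < S.N := by
    have : 0 < S.N := by have := S.hn1; omega
    exact_mod_cast this
  have hp : 0 < S.p := div_pos (by exact_mod_cast S.hn1) hN0
  have hq : 0 < S.q := by
    have h1 : S.p < 1 := by
      rw [show S.p = (S.n : ℝ) / S.N from rfl, div_lt_one hN0]
      exact_mod_cast hlt
    have h2 : S.q = 1 - S.p := rfl
    linarith
  have hn0 : (0 : ℝ) < S.n := by exact_mod_cast S.hn1
  have hs : 0 < s := Real.sqrt_pos.mpr (mul_pos hn0 hq)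
  have hab : -(Real.pi * s) ≤ Real.pi * s := by
    have := mul_pos Real.pi_pos hs
    linarith
  rw [MeasureTheory.integral_Icc_eq_integral_Ioc, ← intervalIntegral.integral_of_le hab]
  rw [intervalIntegral.integral_congr (g := fun τ =>
    ∑ A ∈ (Finset.univ : Finset (Fin S.N)).powerset,
      ((S.p ^ A.card * S.q ^ (S.N - A.card) : ℝ) : ℂ) * (∏ m ∈ A, S.chfY m t) *
        Complex.exp (Complex.I * τ *
          ((((((A.card : ℤ) - (S.n : ℤ) : ℤ) : ℝ)) / s : ℝ) : ℂ)))
    (fun τ _ => S.prod_cf hlt t τ)]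
  rw [intervalIntegral.integral_finset_sum (fun A _ =>
    Continuous.intervalIntegrable (by fun_prop) _ _)]
  have hstep : ∀ A ∈ (Finset.univ : Finset (Fin S.N)).powerset,
      (∫ τ in (-(Real.pi * s))..(Real.pi * s),
        ((S.p ^ A.card * S.q ^ (S.N - A.card) : ℝ) : ℂ) * (∏ m ∈ A, S.chfY m t) *
          Complex.exp (Complex.I * τ *
            ((((((A.card : ℤ) - (S.n : ℤ) : ℤ) : ℝ)) / s : ℝ) : ℂ)))
      = if A.card = S.n then
          ((S.p ^ A.card * S.q ^ (S.N - A.card) : ℝ) : ℂ) * (∏ m ∈ A, S.chfY m t) *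
            ((2 * Real.pi * s : ℝ) : ℂ)
        else 0 := by
    intro A _
    rw [intervalIntegral.integral_const_mul, int_exp_tau hs ((A.card : ℤ) - S.n)]
    by_cases hcard : A.card = S.n
    · rw [if_pos (by omega : (A.card : ℤ) - S.n = 0), if_pos hcard]
    · rw [if_neg (by omega : ¬((A.card : ℤ) - S.n = 0)), if_neg hcard, mul_zero]
  rw [Finset.sum_congr rfl hstep, ← Finset.sum_filter, ← Finset.powersetCard_eq_filter]
  rw [Finset.mul_sum]
  refine Finset.sum_congr rfl fun A hA => ?_
  have hcard : A.card = S.n := (Finset.mem_powersetCard.mp hA).2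
  rw [hcard]
  push_cast
  ring

end Scheme


/-- integral representation (2.1) of the characteristic function of the sample
sum. -/
theorem stmt_0 (S : Scheme) (hlt : S.n < S.N) (t : ℝ) :
    (∫ ω, Complex.exp (Complex.I * t * S.Ssum ω)) =
      ((1 / (Real.sqrt (2 * Real.pi) *
          (Real.sqrt (2 * Real.pi * S.n * S.q) * (S.N.choose S.n) * S.p ^ S.n *
            S.q ^ (S.N - S.n))) : ℝ) : ℂ) *
        ∫ τ in Set.Icc (-(Real.pi * Real.sqrt ((S.n : ℝ) * S.q)))
            (Real.pi * Real.sqrt ((S.n : ℝ) * S.q)),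
          ∏ m, ∫ ω, Complex.exp (Complex.I * t * S.Y m ω * S.ξ m ω +
            Complex.I * τ * ((S.ξ m ω - S.p) / Real.sqrt ((S.n : ℝ) * S.q))) := by
  classical
  have hn1 := S.hn1
  have hNnat : 0 < S.N := by omega
  have hN0 : (0 : ℝ) < S.N := by exact_mod_cast hNnat
  have hp : 0 < S.p := div_pos (by exact_mod_cast hn1) hN0
  have hq : 0 < S.q := by
    have h1 : S.p < 1 := by
      rw [show S.p = (S.n : ℝ) / S.N from rfl, div_lt_one hN0]
      exact_mod_cast hlt
    have h2 : S.q = 1 - S.p := rfl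
    linarith
  have hn0 : (0 : ℝ) < S.n := by exact_mod_cast hn1
  have hs : 0 < Real.sqrt ((S.n : ℝ) * S.q) := Real.sqrt_pos.mpr (mul_pos hn0 hq)
  have hC : 0 < S.N.choose S.n := Nat.choose_pos S.hnN
  rw [S.lhs_eq t, S.rhs_val hlt t]
  have hpc := perm_count S.n S.hnN (fun m => S.chfY m t)
  have hCc : ((S.N.choose S.n : ℕ) : ℂ) ≠ 0 := Nat.cast_ne_zero.mpr hC.ne'
  have hLc : ((S.N.factorial : ℕ) : ℂ) ≠ 0 := Nat.cast_ne_zero.mpr (Nat.factorial_ne_zero _)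
  have hsum_e : (∑ e : Equiv.Perm (Fin S.N),
      ∏ i ∈ Finset.univ.filter (fun i : Fin S.N => (i : ℕ) < S.n), S.chfY (e i) t)
      = ((S.N.factorial : ℂ) / (S.N.choose S.n : ℂ)) *
        ∑ A ∈ Finset.powersetCard S.n (Finset.univ : Finset (Fin S.N)),
          ∏ m ∈ A, S.chfY m t := by
    field_simp
    linear_combination hpc
  rw [hsum_e]
  conv_rhs => rw [← mul_assoc, ← Complex.ofReal_mul]
  have hreal : (1 / (Real.sqrt (2 * Real.pi) *
      (Real.sqrt (2 * Real.pi * S.n * S.q) * (S.N.choose S.n) * S.p ^ S.n *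
        S.q ^ (S.N - S.n)))) *
      (2 * Real.pi * Real.sqrt ((S.n : ℝ) * S.q) * (S.p ^ S.n * S.q ^ (S.N - S.n)))
      = ((S.N.choose S.n : ℝ))⁻¹ := by
    have hsplit : Real.sqrt (2 * Real.pi * S.n * S.q)
        = Real.sqrt (2 * Real.pi) * Real.sqrt ((S.n : ℝ) * S.q) := by
      rw [show 2 * Real.pi * (S.n : ℝ) * S.q = (2 * Real.pi) * ((S.n : ℝ) * S.q) from by ring,
        Real.sqrt_mul (by positivity)]
    have h2π : Real.sqrt (2 * Real.pi) * Real.sqrt (2 * Real.pi) = 2 * Real.pi :=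
      Real.mul_self_sqrt (by positivity)
    have h2πpos : 0 < Real.sqrt (2 * Real.pi) := Real.sqrt_pos.mpr (by positivity)
    have hppow : (0 : ℝ) < S.p ^ S.n := pow_pos hp _
    have hqpow : (0 : ℝ) < S.q ^ (S.N - S.n) := pow_pos hq _
    have hCr : (0 : ℝ) < (S.N.choose S.n : ℝ) := by exact_mod_cast hC
    rw [hsplit]
    have key : Real.sqrt (2 * Real.pi) * (Real.sqrt (2 * Real.pi) * Real.sqrt ((S.n : ℝ) * S.q) *
        (S.N.choose S.n) * S.p ^ S.n * S.q ^ (S.N - S.n))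
        = 2 * Real.pi * Real.sqrt ((S.n : ℝ) * S.q) * (S.p ^ S.n * S.q ^ (S.N - S.n)) *
          (S.N.choose S.n : ℝ) := by
      linear_combination (Real.sqrt ((S.n : ℝ) * S.q) * (S.N.choose S.n : ℝ) *
        (S.p ^ S.n * S.q ^ (S.N - S.n))) * h2π
    rw [key]
    field_simp
  rw [hreal]
  rw [show (((S.N.factorial : ℝ)⁻¹ : ℝ) : ℂ) = ((S.N.factorial : ℂ))⁻¹ by push_cast; ring,
    show ((((S.N.choose S.n : ℝ))⁻¹ : ℝ) : ℂ) = ((S.N.choose S.n : ℂ))⁻¹ by push_cast; ring]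
  rw [← mul_assoc]
  congr 1
  field_simp
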